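/- For every integer n ≥ 1, the following identity holds in ℤ[q]: [n+1]_q · ([2n−1 choose n]_q − q · [2n−1 choose n−2]_q) = [2n choose n]_q; equivalently, the q-Catalan number satisfies C_n(q) = [2n−1 choose n]_q − q·[2n−1 choose n−2]_q. -/

import Mathlib

open Polynomial

/-- The q-integer `[n]_q = 1 + q + ⋯ + q^{n−1}` as a polynomial in `ℤ[q]`
(with `[0]_q = 0`). -/
noncomputable def qIntP (n : ℕ) : Polynomial ℤ := ∑ i ∈ Finset.range n, Polynomial.X ^ i

/-- The q-factorial `[n]_q! = [1]_q[2]_q⋯[n]_q` in `ℤ[q]`. -/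
noncomputable def qFactP (n : ℕ) : Polynomial ℤ := ∏ i ∈ Finset.range n, qIntP (i + 1)

/-- The Gaussian binomial coefficient `[m choose k]_q = [m]_q!/([k]_q![m−k]_q!)`
as a polynomial in `ℤ[q]` (the division, by a monic polynomial, is exact),
and `0` if `k > m`. -/
noncomputable def qBinomP (m k : ℕ) : Polynomial ℤ :=
  if k ≤ m then qFactP m /ₘ (qFactP k * qFactP (m - k)) else 0

/-- The Gaussian binomial coefficient `[m choose k]_{q²}`, i.e. `[m choose k]_q`
with `q` replaced by `q²`. -/
noncomputable def qBinomP2 (m k : ℕ) : Polynomial ℤ := (qBinomP m k).comp (Polynomial.X ^ 2)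

/-- The Gaussian binomial coefficient with an integer lower index, equal to `0`
for negative lower index. -/
noncomputable def qBinomZ (m : ℕ) (k : ℤ) : Polynomial ℤ :=
  if 0 ≤ k then qBinomP m k.toNat else 0

/-- The q-Catalan number `C_n(q) = (1/[n+1]_q)·[2n choose n]_q` as a polynomial
in `ℤ[q]` (the division, by a monic polynomial, is exact). -/
noncomputable def qCatalanP (n : ℕ) : Polynomial ℤ := qBinomP (2 * n) n /ₘ qIntP (n + 1)

/-! ### Auxiliary development: Gaussian binomials via the q-Pascal recursion -/

/-- Gaussian binomial defined by the q-Pascal recursion. -/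
noncomputable def qB : ℕ → ℕ → Polynomial ℤ
  | _, 0 => 1
  | 0, _+1 => 0
  | m+1, k+1 => qB m (k+1) + Polynomial.X ^ (m - k) * qB m k

lemma qIntP_monic (n : ℕ) : (qIntP (n+1)).Monic := by
  simpa [qIntP] using Polynomial.monic_geom_sum_X (R := ℤ) (n := n+1) (by omega)

lemma qFactP_monic (n : ℕ) : (qFactP n).Monic :=
  Polynomial.monic_prod_of_monic _ _ fun i _ => qIntP_monic i

lemma qFactP_succ (n : ℕ) : qFactP (n+1) = qFactP n * qIntP (n+1) := by
  simp [qFactP, Finset.prod_range_succ]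

lemma qIntP_add (a b : ℕ) : qIntP (a + b) = qIntP a + Polynomial.X ^ a * qIntP b := by
  simp only [qIntP, Finset.sum_range_add, Finset.mul_sum, ← pow_add]

lemma qB_zero_of_lt : ∀ m k : ℕ, m < k → qB m k = 0
  | 0, _+1, _ => rfl
  | m+1, k+1, h => by
      rw [qB, qB_zero_of_lt m (k+1) (by omega), qB_zero_of_lt m k (by omega)]
      ring

lemma qB_mul_fact : ∀ a b : ℕ, qB (a + b) a * (qFactP a * qFactP b) = qFactP (a + b) := by
  intro a
  induction a with
  | zero => intro b; simp [qB, qFactP]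
  | succ a ih =>
    intro b
    induction b with
    | zero =>
      have h0 := ih 0
      have hF0 : qFactP 0 = 1 := by simp [qFactP]
      rw [Nat.add_zero, hF0, mul_one] at h0 ⊢
      rw [show qB (a+1) (a+1) = qB a (a+1) + Polynomial.X ^ (a-a) * qB a a from rfl,
        qB_zero_of_lt a (a+1) (by omega), Nat.sub_self, qFactP_succ]
      calc (0 + Polynomial.X ^ 0 * qB a a) * (qFactP a * qIntP (a+1))
          = (qB a a * qFactP a) * qIntP (a+1) := by ring
        _ = qFactP a * qIntP (a+1) := by rw [h0]
    | succ b ihb =>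
      have h1 : qB (a+b+1) (a+1) * (qFactP (a+1) * qFactP b) = qFactP (a+b+1) := by
        have := ihb; rwa [show a+1+b = a+b+1 by omega] at this
      have h2 : qB (a+b+1) a * (qFactP a * qFactP (b+1)) = qFactP (a+b+1) := by
        have := ih (b+1); rwa [show a+(b+1) = a+b+1 by omega] at this
      have e1 : a + 1 + (b + 1) = (a + b + 1) + 1 := by omega
      rw [e1]
      show (qB (a+b+1) (a+1) + Polynomial.X ^ ((a+b+1) - a) * qB (a+b+1) a) *
          (qFactP (a+1) * qFactP (b+1)) = qFactP (a+b+1+1)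
      rw [show (a+b+1) - a = b+1 by omega]
      rw [qFactP_succ (a+b+1), show a+b+1+1 = (b+1)+(a+1) by omega, qIntP_add (b+1) (a+1)]
      rw [qFactP_succ a, qFactP_succ b] at *
      linear_combination qIntP (b+1) * h1 + Polynomial.X ^ (b+1) * qIntP (a+1) * h2

lemma qBinomP_eq_qB {m k : ℕ} (h : k ≤ m) : qBinomP m k = qB m k := by
  obtain ⟨b, rfl⟩ := Nat.exists_eq_add_of_le h
  rw [qBinomP, if_pos h, show k + b - k = b by omega, ← qB_mul_fact k b,
    mul_comm (qB (k+b) k)]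
  exact Polynomial.mul_divByMonic_cancel_left _ ((qFactP_monic k).mul (qFactP_monic b))

lemma qB_symm (a b : ℕ) : qB (a + b) a = qB (a + b) b := by
  have hne : qFactP a * qFactP b ≠ 0 := ((qFactP_monic a).mul (qFactP_monic b)).ne_zero
  apply mul_right_cancel₀ hne
  rw [qB_mul_fact a b]
  have h := qB_mul_fact b a
  rw [show b + a = a + b by omega] at h
  linear_combination -h

lemma qB_ratio (k c : ℕ) :
    qB (k+1+c) (k+1) * qIntP (k+1) = qB (k+1+c) k * qIntP (c+1) := by
  have hne : qFactP k * qFactP c ≠ 0 := ((qFactP_monic k).mul (qFactP_monic c)).ne_zero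
  apply mul_right_cancel₀ hne
  have h1 := qB_mul_fact (k+1) c
  have h2 := qB_mul_fact k (c+1)
  rw [show k + (c+1) = k+1+c by omega] at h2
  rw [qFactP_succ k] at h1
  rw [qFactP_succ c] at h2
  linear_combination h1 - h2

/-- For every `n ≥ 1`, in `ℤ[q]`:
`[n+1]_q·([2n−1 choose n]_q − q·[2n−1 choose n−2]_q) = [2n choose n]_q`;
equivalently `C_n(q) = [2n−1 choose n]_q − q·[2n−1 choose n−2]_q`
(the lower index `n−2` is taken in `ℤ`, so the second binomial vanishes
for `n = 1`). -/
theorem qCatalan_eq_qbinom_sub (n : ℕ) (hn : 1 ≤ n) :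
    qIntP (n + 1) *
        (qBinomP (2 * n - 1) n - Polynomial.X * qBinomZ (2 * n - 1) ((n : ℤ) - 2)) =
      qBinomP (2 * n) n ∧
    qCatalanP n =
      qBinomP (2 * n - 1) n - Polynomial.X * qBinomZ (2 * n - 1) ((n : ℤ) - 2) := by
  have main : qIntP (n + 1) *
      (qBinomP (2 * n - 1) n - Polynomial.X * qBinomZ (2 * n - 1) ((n : ℤ) - 2)) =
      qBinomP (2 * n) n := by
    match n, hn with
    | 1, _ =>
      norm_num [qBinomZ]
      rw [qBinomP_eq_qB (by norm_num), qBinomP_eq_qB (by norm_num)]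
      show qIntP 2 * qB 1 1 = qB 2 1
      show qIntP 2 * (qB 0 1 + Polynomial.X ^ 0 * qB 0 0) =
        qB 1 1 + Polynomial.X ^ (1 - 0) * qB 1 0
      show qIntP 2 * (0 + Polynomial.X ^ 0 * 1) =
        (qB 0 1 + Polynomial.X ^ 0 * qB 0 0) + Polynomial.X ^ (1 - 0) * 1
      show qIntP 2 * (0 + Polynomial.X ^ 0 * 1) =
        (0 + Polynomial.X ^ 0 * 1) + Polynomial.X ^ (1 - 0) * 1
      rw [show qIntP 2 = 1 + Polynomial.X by simp [qIntP, Finset.sum_range_succ]]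
      ring
    | (p+2), _ =>
      have hz : qBinomZ (2 * (p+2) - 1) (((p+2 : ℕ) : ℤ) - 2) = qBinomP (2*p+3) p := by
        rw [qBinomZ, if_pos (by push_cast; omega)]
        rw [show (((p+2 : ℕ) : ℤ) - 2).toNat = p by omega,
          show 2 * (p+2) - 1 = 2*p+3 by omega]
      rw [hz, show 2 * (p+2) - 1 = 2*p+3 by omega, show 2 * (p+2) = 2*p+4 by omega]
      rw [qBinomP_eq_qB (show p+2 ≤ 2*p+3 by omega),
        qBinomP_eq_qB (show p ≤ 2*p+3 by omega),
        qBinomP_eq_qB (show p+2 ≤ 2*p+4 by omega)]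
      -- key facts
      have ratio : qB (2*p+3) (p+1) * qIntP (p+1) = qB (2*p+3) p * qIntP (p+3) := by
        have := qB_ratio p (p+2)
        rwa [show p+1+(p+2) = 2*p+3 by omega, show p+2+1 = p+3 by omega] at this
      have symm : qB (2*p+3) (p+2) = qB (2*p+3) (p+1) := by
        have := qB_symm (p+2) (p+1)
        rwa [show p+2+(p+1) = 2*p+3 by omega] at this
      have pascal : qB (2*p+4) (p+2)
          = qB (2*p+3) (p+2) + Polynomial.X ^ (p+2) * qB (2*p+3) (p+1) := by
        show qB ((2*p+3)+1) ((p+1)+1) = _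
        rw [show qB ((2*p+3)+1) ((p+1)+1)
            = qB (2*p+3) (p+2) + Polynomial.X ^ ((2*p+3)-(p+1)) * qB (2*p+3) (p+1) from rfl,
          show (2*p+3)-(p+1) = p+2 by omega]
      have key : qIntP (p+3) - Polynomial.X * qIntP (p+1) = 1 + Polynomial.X ^ (p+2) := by
        rw [show p+3 = 1 + (p+2) by omega, qIntP_add 1 (p+2),
          show p+2 = (p+1)+1 by omega, qIntP_add (p+1) 1]
        simp only [qIntP, Finset.sum_range_one, pow_zero, Finset.sum_range_succ]
        ring
      rw [pascal, symm, show p+2+1 = p+3 by omega]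
      linear_combination Polynomial.X * ratio
        + qB (2*p+3) (p+1) * key
  refine ⟨main, ?_⟩
  rw [qCatalanP, ← main]
  exact Polynomial.mul_divByMonic_cancel_left _ (qIntP_monic n)
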